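/- Let g = [[a,b],[c,d]] ∈ GL(2m,ℝ) (written in m×m blocks) and let x₁, x₂, x₃, x₄ ∈ M_m(ℝ) be such that cx_i + d is invertible for i = 1,2,3,4 and the matrices x₂−x₃, x₁−x₄ and (g·x₂ − g·x₃), (g·x₁ − g·x₄) are all invertible. Then the Kantor cross ratio is invariant: [det(g·x₁ − g·x₃)/det(g·x₂ − g·x₃)] · [det(g·x₂ − g·x₄)/det(g·x₁ − g·x₄)] = [det(x₁ − x₃)/det(x₂ − x₃)] · [det(x₂ − x₄)/det(x₁ − x₄)]. -/

import Mathlib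

open Matrix

lemma kantor_key {m : ℕ} (a b c d x y : Matrix (Fin m) (Fin m) ℝ)
    (hx : IsUnit (c * x + d).det) (hy : IsUnit (c * y + d).det) :
    ((a * x + b) * (c * x + d)⁻¹ - (a * y + b) * (c * y + d)⁻¹).det
      * ((c * x + d).det * (c * y + d).det)
    = (Matrix.fromBlocks a b c d).det * (x - y).det := by
  haveI := (c * x + d).invertibleOfIsUnitDet hx
  have h1 : ((a * x + b) * (c * x + d)⁻¹ - (a * y + b) * (c * y + d)⁻¹) * (c * y + d)
      = (a - (a * x + b) * (c * x + d)⁻¹ * c) * (x - y) := by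
    have hEx : (a * x + b) * (c * x + d)⁻¹ * (c * x + d) = a * x + b :=
      Matrix.nonsing_inv_mul_cancel_right _ _ hx
    have hEd : (a * x + b) * (c * x + d)⁻¹ * d
        = a * x + b - (a * x + b) * (c * x + d)⁻¹ * (c * x) := by
      refine eq_sub_of_add_eq ?_
      rw [add_comm, ← mul_add]
      exact hEx
    rw [sub_mul, Matrix.nonsing_inv_mul_cancel_right _ _ hy]
    simp only [sub_mul, mul_sub, mul_add, mul_assoc] at hEd ⊢
    rw [hEd]
    abel
  have h2 : (Matrix.fromBlocks a (a * x + b) c (c * x + d)).det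
      = (Matrix.fromBlocks a b c d).det := by
    have : Matrix.fromBlocks a (a * x + b) c (c * x + d)
        = Matrix.fromBlocks a b c d * Matrix.fromBlocks 1 x 0 1 := by
      rw [Matrix.fromBlocks_multiply]; simp
    rw [this, Matrix.det_mul, Matrix.det_fromBlocks_zero₂₁]
    simp
  rw [Matrix.det_fromBlocks₂₂, Matrix.invOf_eq_nonsing_inv] at h2
  have h3 := congrArg Matrix.det h1
  rw [Matrix.det_mul, Matrix.det_mul] at h3
  calc ((a * x + b) * (c * x + d)⁻¹ - (a * y + b) * (c * y + d)⁻¹).det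
      * ((c * x + d).det * (c * y + d).det)
      = ((a * x + b) * (c * x + d)⁻¹ - (a * y + b) * (c * y + d)⁻¹).det
        * (c * y + d).det * (c * x + d).det := by ring
    _ = (a - (a * x + b) * (c * x + d)⁻¹ * c).det * (x - y).det * (c * x + d).det := by
        rw [h3]
    _ = (c * x + d).det * (a - (a * x + b) * (c * x + d)⁻¹ * c).det * (x - y).det := by
        ring
    _ = (Matrix.fromBlocks a b c d).det * (x - y).det := by rw [h2]

/-- Invariance of the Kantor cross ratio under conformal (fractional linear)
transformations of `M_m(ℝ)`. -/
theorem kantor_cross_ratio_invariant {m : ℕ}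
    (a b c d : Matrix (Fin m) (Fin m) ℝ)
    (hg : IsUnit (Matrix.fromBlocks a b c d).det)
    (x₁ x₂ x₃ x₄ : Matrix (Fin m) (Fin m) ℝ)
    (h₁ : IsUnit (c * x₁ + d).det) (h₂ : IsUnit (c * x₂ + d).det)
    (h₃ : IsUnit (c * x₃ + d).det) (h₄ : IsUnit (c * x₄ + d).det)
    (h₂₃ : IsUnit (x₂ - x₃).det) (h₁₄ : IsUnit (x₁ - x₄).det)
    (hg₂₃ : IsUnit ((a * x₂ + b) * (c * x₂ + d)⁻¹
        - (a * x₃ + b) * (c * x₃ + d)⁻¹).det)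
    (hg₁₄ : IsUnit ((a * x₁ + b) * (c * x₁ + d)⁻¹
        - (a * x₄ + b) * (c * x₄ + d)⁻¹).det) :
    ((a * x₁ + b) * (c * x₁ + d)⁻¹ - (a * x₃ + b) * (c * x₃ + d)⁻¹).det
        / ((a * x₂ + b) * (c * x₂ + d)⁻¹ - (a * x₃ + b) * (c * x₃ + d)⁻¹).det
      * (((a * x₂ + b) * (c * x₂ + d)⁻¹ - (a * x₄ + b) * (c * x₄ + d)⁻¹).det
        / ((a * x₁ + b) * (c * x₁ + d)⁻¹ - (a * x₄ + b) * (c * x₄ + d)⁻¹).det)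
    = (x₁ - x₃).det / (x₂ - x₃).det * ((x₂ - x₄).det / (x₁ - x₄).det) := by
  have k₁ : (c * x₁ + d).det ≠ 0 := h₁.ne_zero
  have k₂ : (c * x₂ + d).det ≠ 0 := h₂.ne_zero
  have k₃ : (c * x₃ + d).det ≠ 0 := h₃.ne_zero
  have k₄ : (c * x₄ + d).det ≠ 0 := h₄.ne_zero
  have kg : (Matrix.fromBlocks a b c d).det ≠ 0 := hg.ne_zero
  have k₂₃ : (x₂ - x₃).det ≠ 0 := h₂₃.ne_zero
  have k₁₄ : (x₁ - x₄).det ≠ 0 := h₁₄.ne_zero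
  have e₁₃ := kantor_key a b c d x₁ x₃ h₁ h₃
  have e₂₃ := kantor_key a b c d x₂ x₃ h₂ h₃
  have e₂₄ := kantor_key a b c d x₂ x₄ h₂ h₄
  have e₁₄ := kantor_key a b c d x₁ x₄ h₁ h₄
  have f₁₃ : ((a * x₁ + b) * (c * x₁ + d)⁻¹ - (a * x₃ + b) * (c * x₃ + d)⁻¹).det
      = (Matrix.fromBlocks a b c d).det * (x₁ - x₃).det
        / ((c * x₁ + d).det * (c * x₃ + d).det) := by
    rw [eq_div_iff (mul_ne_zero k₁ k₃)]
    exact e₁₃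
  have f₂₃ : ((a * x₂ + b) * (c * x₂ + d)⁻¹ - (a * x₃ + b) * (c * x₃ + d)⁻¹).det
      = (Matrix.fromBlocks a b c d).det * (x₂ - x₃).det
        / ((c * x₂ + d).det * (c * x₃ + d).det) := by
    rw [eq_div_iff (mul_ne_zero k₂ k₃)]
    exact e₂₃
  have f₂₄ : ((a * x₂ + b) * (c * x₂ + d)⁻¹ - (a * x₄ + b) * (c * x₄ + d)⁻¹).det
      = (Matrix.fromBlocks a b c d).det * (x₂ - x₄).det
        / ((c * x₂ + d).det * (c * x₄ + d).det) := by
    rw [eq_div_iff (mul_ne_zero k₂ k₄)]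
    exact e₂₄
  have f₁₄ : ((a * x₁ + b) * (c * x₁ + d)⁻¹ - (a * x₄ + b) * (c * x₄ + d)⁻¹).det
      = (Matrix.fromBlocks a b c d).det * (x₁ - x₄).det
        / ((c * x₁ + d).det * (c * x₄ + d).det) := by
    rw [eq_div_iff (mul_ne_zero k₁ k₄)]
    exact e₁₄
  rw [f₁₃, f₂₃, f₂₄, f₁₄]
  field_simp
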